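/- Let 0 < α < 1, 1 < β ≤ 2, μ_α ≥ 0 and μ_β < 0, and let m ≥ 2. Then the matrix D = μ_α(A + Aᵀ) + μ_β(B + Bᵀ) is symmetric and positive definite. -/

import Mathlib

/-- Grünwald–Letnikov coefficients: `g γ 0 = 1`, `g γ k = (1 - (γ+1)/k) * g γ (k-1)`. -/
noncomputable def g (γ : ℝ) : ℕ → ℝ
  | 0 => 1
  | k + 1 => (1 - (γ + 1) / ((k : ℝ) + 1)) * g γ k

/-- WSGD coefficients: `w γ 0 = (γ/2) g γ 0`, `w γ k = (γ/2) g γ k + ((2-γ)/2) g γ (k-1)`. -/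
noncomputable def w (γ : ℝ) : ℕ → ℝ
  | 0 => γ / 2 * g γ 0
  | k + 1 => γ / 2 * g γ (k + 1) + (2 - γ) / 2 * g γ k

lemma g_zero (γ : ℝ) : g γ 0 = 1 := rfl
lemma g_succ (γ : ℝ) (k : ℕ) : g γ (k+1) = (1 - (γ + 1) / ((k : ℝ) + 1)) * g γ k := rfl
lemma w_zero (γ : ℝ) : w γ 0 = γ / 2 := by simp [w, g]
lemma w_succ (γ : ℝ) (k : ℕ) : w γ (k+1) = γ / 2 * g γ (k + 1) + (2 - γ) / 2 * g γ k := rfl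

lemma g_shift (γ : ℝ) : ∀ n : ℕ, g γ (n+1) = -(γ / ((n:ℝ)+1)) * g (γ-1) n := by
  intro n
  induction n with
  | zero => simp [g_succ, g_zero]
  | succ n ih =>
    have h1 : ((n:ℝ)+1) ≠ 0 := by positivity
    have h2 : ((n:ℝ)+1+1) ≠ 0 := by positivity
    have e1 : g γ (n+1+1) = (1 - (γ+1)/((n:ℝ)+1+1)) * g γ (n+1) := by
      rw [g_succ]; push_cast; ring_nf
    have e2 : g (γ-1) (n+1) = (1 - γ/((n:ℝ)+1)) * g (γ-1) n := by
      rw [g_succ]; ring_nf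
    rw [e1, ih, e2]
    field_simp
    push_cast
    ring

lemma sum_g (γ : ℝ) : ∀ n : ℕ, ∑ k ∈ Finset.range (n+1), g γ k = g (γ-1) n := by
  intro n
  induction n with
  | zero => simp [g_zero]
  | succ n ih =>
    rw [Finset.sum_range_succ, ih, g_shift]
    have e2 : g (γ-1) (n+1) = (1 - γ/((n:ℝ)+1)) * g (γ-1) n := by
      rw [g_succ]; ring_nf
    rw [e2]; ring

lemma sum_w (γ : ℝ) : ∀ n : ℕ, ∑ k ∈ Finset.range (n+2), w γ k
    = γ/2 * g (γ-1) (n+1) + (2-γ)/2 * g (γ-1) n := by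
  intro n
  induction n with
  | zero =>
    rw [Finset.sum_range_succ, Finset.sum_range_one, w_zero, w_succ]
    have e1 : g γ 1 = -γ := by rw [g_succ, g_zero]; norm_num
    have e2 : g (γ-1) 1 = 1 - γ := by rw [g_succ, g_zero]; norm_num
    rw [e1, e2, g_zero, g_zero]
    ring
  | succ n ih =>
    have h1 : ((n:ℝ)+1) ≠ 0 := by positivity
    have h2 : ((n:ℝ)+2) ≠ 0 := by positivity
    have hab : g (γ-1) (n+1) = (1 - γ/((n:ℝ)+1)) * g (γ-1) n := by
      rw [g_succ]; ring_nf
    have hgg : g (γ-1) (n+2) = (1 - γ/((n:ℝ)+2)) * g (γ-1) (n+1) := by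
      rw [show n+2 = (n+1)+1 from rfl, g_succ]; push_cast; ring_nf
    have hs1 : g γ (n+2) = -(γ/((n:ℝ)+2)) * g (γ-1) (n+1) := by
      rw [show n+2 = (n+1)+1 from rfl, g_shift]; push_cast; ring_nf
    have hs0 : g γ (n+1) = -(γ/((n:ℝ)+1)) * g (γ-1) n := g_shift γ n
    rw [show n+1+2 = (n+2)+1 from rfl, Finset.sum_range_succ, ih,
      show (n:ℕ)+2 = (n+1)+1 from rfl, w_succ,
      show (n:ℕ)+1+1 = n+2 from rfl, hs1, hs0, hgg, hab]
    field_simp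
    ring

section Signs
variable {α β : ℝ}

lemma gm_pos (hα0 : 0 < α) (hα1 : α < 1) : ∀ k, 0 < g (α-1) k := by
  intro k
  induction k with
  | zero => rw [g_zero]; norm_num
  | succ k ih =>
    rw [g_succ]
    have : 0 < 1 - (α - 1 + 1) / ((k:ℝ)+1) := by
      have hk : (0:ℝ) ≤ (k:ℝ) := Nat.cast_nonneg k
      rw [sub_pos, div_lt_one (by positivity)]
      linarith
    exact mul_pos this ih

lemma gm_nonpos (hβ1 : 1 < β) (hβ2 : β ≤ 2) : ∀ k, g (β-1) (k+1) ≤ 0 := by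
  intro k
  induction k with
  | zero =>
    rw [g_succ, g_zero]; norm_num; linarith
  | succ k ih =>
    rw [g_succ]
    have h : 0 ≤ 1 - (β - 1 + 1) / ((k:ℝ)+1+1) := by
      have : β - 1 + 1 = β := by ring
      rw [this, sub_nonneg, div_le_one (by positivity)]
      have : (0:ℝ) ≤ (k:ℝ) := Nat.cast_nonneg k
      linarith
    have : ((k+1 : ℕ):ℝ) = (k:ℝ)+1 := by push_cast; ring
    rw [this]
    exact mul_nonpos_of_nonneg_of_nonpos h ih

lemma g_neg_alpha (hα0 : 0 < α) (hα1 : α < 1) : ∀ k, g α (k+1) < 0 := by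
  intro k
  induction k with
  | zero => rw [g_succ, g_zero]; norm_num; linarith
  | succ k ih =>
    rw [g_succ]
    have h : 0 < 1 - (α + 1) / (((k+1 : ℕ):ℝ)+1) := by
      push_cast
      rw [sub_pos, div_lt_one (by positivity)]
      have : (0:ℝ) ≤ (k:ℝ) := Nat.cast_nonneg k
      linarith
    exact mul_neg_of_pos_of_neg h ih

lemma g_nonneg_beta (hβ1 : 1 < β) (hβ2 : β ≤ 2) : ∀ k, 0 ≤ g β (k+2) := by
  intro k
  induction k with
  | zero =>
    rw [show (2:ℕ) = 1+1 from rfl, g_succ, g_succ, g_zero]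
    push_cast
    nlinarith
  | succ k ih =>
    rw [show k+1+2 = (k+2)+1 from rfl, g_succ]
    have h : 0 ≤ 1 - (β + 1) / (((k+2 : ℕ):ℝ)+1) := by
      push_cast
      rw [sub_nonneg, div_le_one (by positivity)]
      have : (0:ℝ) ≤ (k:ℝ) := Nat.cast_nonneg k
      linarith
    exact mul_nonneg h ih

lemma w_one_alpha (hα0 : 0 < α) (hα1 : α < 1) : 0 < w α 1 := by
  rw [w_succ, g_succ, g_zero]
  norm_num
  nlinarith

lemma w_one_beta (hβ1 : 1 < β) (hβ2 : β ≤ 2) : w β 1 < 0 := by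
  rw [w_succ, g_succ, g_zero]
  norm_num
  nlinarith

lemma t_one_alpha (hα0 : 0 < α) (hα1 : α < 1) : w α 0 + w α 2 < 0 := by
  rw [w_zero, show (2:ℕ) = 1+1 from rfl, w_succ, g_succ, g_succ, g_zero]
  norm_num
  nlinarith [sq_nonneg α, sq_nonneg (1-α)]

lemma t_one_beta (hβ1 : 1 < β) (hβ2 : β ≤ 2) : 0 < w β 0 + w β 2 := by
  rw [w_zero, show (2:ℕ) = 1+1 from rfl, w_succ, g_succ, g_succ, g_zero]
  norm_num
  nlinarith [sq_nonneg β, sq_nonneg (1-β)]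

lemma w_neg_alpha (hα0 : 0 < α) (hα1 : α < 1) : ∀ k, w α (k+2) < 0 := by
  intro k
  rw [show k+2 = (k+1)+1 from rfl, w_succ]
  have h1 := g_neg_alpha hα0 hα1 (k+1)
  have h2 := g_neg_alpha hα0 hα1 k
  nlinarith

lemma w_nonneg_beta (hβ1 : 1 < β) (hβ2 : β ≤ 2) : ∀ k, 0 ≤ w β (k+3) := by
  intro k
  rw [show k+3 = (k+2)+1 from rfl, w_succ]
  have h1 := g_nonneg_beta hβ1 hβ2 (k+1)
  have h2 := g_nonneg_beta hβ1 hβ2 k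
  rw [show k+1+2 = k+2+1 from rfl] at h1
  nlinarith

lemma psum_alpha (hα0 : 0 < α) (hα1 : α < 1) (n : ℕ) :
    0 < ∑ k ∈ Finset.range (n+2), w α k := by
  rw [sum_w]
  have h1 := gm_pos hα0 hα1 (n+1)
  have h2 := gm_pos hα0 hα1 n
  nlinarith

lemma psum_beta (hβ1 : 1 < β) (hβ2 : β ≤ 2) (n : ℕ) :
    ∑ k ∈ Finset.range (n+3), w β k ≤ 0 := by
  rw [show n+3 = (n+1)+2 from rfl, sum_w]
  have h1 := gm_nonpos hβ1 hβ2 (n+1)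
  have h2 := gm_nonpos hβ1 hβ2 n
  rw [show n+1+1 = n+2 from rfl] at h1
  nlinarith

end Signs

/-- The `(m-1) × (m-1)` lower-Hessenberg Toeplitz matrix with entries
`w_{i-j+1}^{(γ)}` for `j ≤ i+1` (1-based indices) and `0` otherwise. -/
noncomputable def wsgdMatrix (γ : ℝ) (m : ℕ) : Matrix (Fin (m - 1)) (Fin (m - 1)) ℝ :=
  fun i j => if (j : ℕ) ≤ (i : ℕ) + 1 then w γ ((i : ℕ) + 1 - (j : ℕ)) else 0

/-- The Crank–Nicolson matrix `D = μ_α (A + Aᵀ) + μ_β (B + Bᵀ)`. -/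
noncomputable def matD (α β μα μβ : ℝ) (m : ℕ) : Matrix (Fin (m - 1)) (Fin (m - 1)) ℝ :=
  μα • (wsgdMatrix α m + Matrix.transpose (wsgdMatrix α m)) + μβ • (wsgdMatrix β m + Matrix.transpose (wsgdMatrix β m))

/-- Entries of the symmetrized WSGD matrix, as a function of the distance. -/
noncomputable def tq (γ : ℝ) (d : ℕ) : ℝ :=
  if d = 0 then 2 * w γ 1 else if d = 1 then w γ 0 + w γ 2 else w γ (d+1)

lemma tq_big (γ : ℝ) {d : ℕ} (hd : 2 ≤ d) : tq γ d = w γ (d+1) := by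
  rw [tq, if_neg (by omega), if_neg (by omega)]

lemma entry_eq (γ : ℝ) (m : ℕ) (i j : Fin (m-1)) :
    wsgdMatrix γ m i j + wsgdMatrix γ m j i = tq γ (Nat.dist i j) := by
  simp only [wsgdMatrix]
  rcases Nat.lt_trichotomy (i:ℕ) (j:ℕ) with h | h | h
  · rcases eq_or_lt_of_le (Nat.succ_le_of_lt h) with h1 | h1
    · rw [if_pos (by omega), if_pos (by omega),
        show (i:ℕ)+1-(j:ℕ) = 0 by omega, show (j:ℕ)+1-(i:ℕ) = 2 by omega,
        show Nat.dist i j = 1 by simp [Nat.dist]; omega, tq, if_neg (by omega), if_pos rfl]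
    · rw [if_neg (by omega), if_pos (by omega), tq_big γ (show 2 ≤ Nat.dist i j by simp [Nat.dist]; omega),
        show Nat.dist (i:ℕ) (j:ℕ) + 1 = (j:ℕ)+1-(i:ℕ) by simp [Nat.dist]; omega]
      ring
  · rw [if_pos (by omega), if_pos (by omega),
      show (i:ℕ)+1-(j:ℕ) = 1 by omega, show (j:ℕ)+1-(i:ℕ) = 1 by omega,
      show Nat.dist i j = 0 by simp [Nat.dist]; omega, tq, if_pos rfl]
    ring
  · rcases eq_or_lt_of_le (Nat.succ_le_of_lt h) with h1 | h1
    · rw [if_pos (by omega), if_pos (by omega),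
        show (i:ℕ)+1-(j:ℕ) = 2 by omega, show (j:ℕ)+1-(i:ℕ) = 0 by omega,
        show Nat.dist i j = 1 by simp [Nat.dist]; omega, tq, if_neg (by omega), if_pos rfl]
      ring
    · rw [if_pos (by omega), if_neg (by omega), tq_big γ (show 2 ≤ Nat.dist i j by simp [Nat.dist]; omega),
        show Nat.dist (i:ℕ) (j:ℕ) + 1 = (i:ℕ)+1-(j:ℕ) by simp [Nat.dist]; omega]
      ring

/-- partial sums of `tq` at positive distances -/
noncomputable def V (γ : ℝ) (p : ℕ) : ℝ := ∑ d ∈ Finset.range p, tq γ (d+1)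

lemma w1_add_V (γ : ℝ) : ∀ p, w γ 1 + V γ (p+1) = ∑ k ∈ Finset.range (p+3), w γ k := by
  intro p
  induction p with
  | zero =>
    rw [V, Finset.sum_range_one, tq, if_neg (by omega), if_pos rfl]
    rw [Finset.sum_range_succ, Finset.sum_range_succ, Finset.sum_range_one]
    ring
  | succ p ih =>
    rw [V, Finset.sum_range_succ, ← V, show p+1+1 = p+2 from rfl,
      tq_big γ (show 2 ≤ p+2 by omega)]
    rw [show p+1+3 = (p+3)+1 from rfl, Finset.sum_range_succ, ← ih,
      show p+2+1 = p+3 from rfl]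
    ring

lemma rowsum (γ : ℝ) {n : ℕ} (i : Fin n) :
    ∑ j : Fin n, tq γ (Nat.dist i j) = 2 * w γ 1 + V γ i + V γ (n-1-i) := by
  rw [Fin.sum_univ_eq_sum_range (fun j => tq γ (Nat.dist i j)) n]
  have hi : (i:ℕ) < n := i.isLt
  rw [Finset.range_eq_Ico, ← Finset.sum_Ico_consecutive _ (Nat.zero_le (i:ℕ)) (le_of_lt hi)]
  have e1 : ∑ j ∈ Finset.Ico 0 (i:ℕ), tq γ (Nat.dist i j) = V γ i := by
    rw [← Finset.range_eq_Ico, V]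
    rw [← Finset.sum_range_reflect (fun d => tq γ (d+1)) i]
    apply Finset.sum_congr rfl
    intro j hj
    simp only [Finset.mem_range] at hj
    congr 1
    simp [Nat.dist]; omega
  have e2 : ∑ j ∈ Finset.Ico (i:ℕ) n, tq γ (Nat.dist i j)
      = 2 * w γ 1 + V γ (n-1-i) := by
    rw [Finset.sum_Ico_eq_sum_range]
    have hn : n - (i:ℕ) = (n-1-(i:ℕ)) + 1 := by omega
    rw [hn, Finset.sum_range_succ']
    have e3 : ∀ j, Nat.dist i ((i:ℕ) + j) = j := by
      intro j; simp [Nat.dist]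
    simp only [e3]
    rw [V, tq, if_pos rfl]
    ring
  rw [e1, e2]; ring

lemma quad_id {n : ℕ} (c : Fin n → Fin n → ℝ) (hs : ∀ i j, c i j = c j i) (x : Fin n → ℝ) :
    ∑ i, ∑ j, c i j * x i * x j
      = ∑ i, (∑ j, c i j) * x i ^ 2
        - ∑ i, ∑ j, c i j * (x i - x j)^2 / 2 := by
  have key : ∑ i, ∑ j, c i j * x j ^ 2 / 2 = ∑ i, ∑ j, c i j * x i ^ 2 / 2 := by
    rw [Finset.sum_comm]
    exact Finset.sum_congr rfl fun i _ => Finset.sum_congr rfl fun j _ => by rw [hs]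
  have expand : ∑ i, ∑ j, c i j * x i * x j
      = ∑ i, ∑ j, (c i j * x i ^ 2 / 2 + c i j * x j ^ 2 / 2 - c i j * (x i - x j)^2 / 2) :=
    Finset.sum_congr rfl fun i _ => Finset.sum_congr rfl fun j _ => by ring
  rw [expand]
  simp only [Finset.sum_add_distrib, Finset.sum_sub_distrib]
  rw [key]
  congr 1
  rw [← Finset.sum_add_distrib]
  apply Finset.sum_congr rfl
  intro i _
  rw [← Finset.sum_add_distrib, Finset.sum_mul]
  apply Finset.sum_congr rfl
  intro j _
  ring

section QF
variable {α β : ℝ}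

lemma hU_alpha (hα0 : 0 < α) (hα1 : α < 1) : ∀ p, 0 < w α 1 + V α p := by
  intro p
  cases p with
  | zero => simpa [V] using w_one_alpha hα0 hα1
  | succ p => rw [w1_add_V]; exact psum_alpha hα0 hα1 (p+1)

lemma hU_beta (hβ1 : 1 < β) (hβ2 : β ≤ 2) : ∀ p, w β 1 + V β p ≤ 0 := by
  intro p
  cases p with
  | zero => simpa [V] using le_of_lt (w_one_beta hβ1 hβ2)
  | succ p => rw [w1_add_V]; exact psum_beta hβ1 hβ2 p

lemma tq_nonpos_alpha (hα0 : 0 < α) (hα1 : α < 1) : ∀ d, d ≠ 0 → tq α d ≤ 0 := by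
  intro d hd
  match d, hd with
  | 1, _ =>
    rw [tq, if_neg (by omega), if_pos rfl]
    exact le_of_lt (t_one_alpha hα0 hα1)
  | (k+2), _ =>
    rw [tq_big α (by omega)]
    exact le_of_lt (w_neg_alpha hα0 hα1 (k+1))

lemma tq_nonneg_beta (hβ1 : 1 < β) (hβ2 : β ≤ 2) : ∀ d, d ≠ 0 → 0 ≤ tq β d := by
  intro d hd
  match d, hd with
  | 1, _ =>
    rw [tq, if_neg (by omega), if_pos rfl]
    exact le_of_lt (t_one_beta hβ1 hβ2)
  | (k+2), _ =>
    rw [tq_big β (by omega)]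
    exact w_nonneg_beta hβ1 hβ2 k

lemma qf_alpha (hα0 : 0 < α) (hα1 : α < 1) {n : ℕ} (x : Fin n → ℝ) :
    0 ≤ ∑ i : Fin n, ∑ j : Fin n, tq α (Nat.dist (i:ℕ) (j:ℕ)) * x i * x j := by
  rw [quad_id (fun i j : Fin n => tq α (Nat.dist (i:ℕ) (j:ℕ)))
    (fun i j => by rw [Nat.dist_comm]) x]
  have h1 : 0 ≤ ∑ i : Fin n, (∑ j : Fin n, tq α (Nat.dist (i:ℕ) (j:ℕ))) * x i ^ 2 := by
    apply Finset.sum_nonneg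
    intro i _
    apply mul_nonneg _ (sq_nonneg _)
    rw [rowsum]
    have := hU_alpha hα0 hα1 i
    have := hU_alpha hα0 hα1 (n-1-i)
    linarith
  have h2 : ∑ i : Fin n, ∑ j : Fin n, tq α (Nat.dist (i:ℕ) (j:ℕ)) * (x i - x j)^2 / 2 ≤ 0 := by
    apply Finset.sum_nonpos
    intro i _
    apply Finset.sum_nonpos
    intro j _
    rcases eq_or_ne i j with rfl | hij
    · simp
    · have hd : Nat.dist i j ≠ 0 := by
        exact fun h0 => hij (Fin.ext (Nat.eq_of_dist_eq_zero h0))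
      have := tq_nonpos_alpha hα0 hα1 _ hd
      have hsq : (0:ℝ) ≤ (x i - x j)^2 := sq_nonneg _
      nlinarith
  linarith


lemma qf_beta (hβ1 : 1 < β) (hβ2 : β ≤ 2) {n : ℕ} (hn : 0 < n)
    (x : Fin n → ℝ) (hx : x ≠ 0) :
    ∑ i : Fin n, ∑ j : Fin n, tq β (Nat.dist (i:ℕ) (j:ℕ)) * x i * x j < 0 := by
  rw [quad_id (fun i j : Fin n => tq β (Nat.dist (i:ℕ) (j:ℕ)))
    (fun i j => by rw [Nat.dist_comm]) x]
  set i0 : Fin n := ⟨0, hn⟩ with hi0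
  have hterm1 : ∀ i : Fin n, (∑ j : Fin n, tq β (Nat.dist (i:ℕ) (j:ℕ))) * x i ^ 2 ≤ 0 := by
    intro i
    apply mul_nonpos_of_nonpos_of_nonneg _ (sq_nonneg _)
    rw [rowsum]
    have := hU_beta hβ1 hβ2 i
    have := hU_beta hβ1 hβ2 (n-1-i)
    linarith
  have h1 : ∑ i : Fin n, (∑ j : Fin n, tq β (Nat.dist (i:ℕ) (j:ℕ))) * x i ^ 2 ≤ 0 :=
    Finset.sum_nonpos fun i _ => hterm1 i
  have hterm2 : ∀ i j : Fin n, 0 ≤ tq β (Nat.dist (i:ℕ) (j:ℕ)) * (x i - x j)^2 / 2 := by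
    intro i j
    rcases eq_or_ne i j with rfl | hij
    · simp
    · have hd : Nat.dist i j ≠ 0 := fun h0 => hij (Fin.ext (Nat.eq_of_dist_eq_zero h0))
      have := tq_nonneg_beta hβ1 hβ2 _ hd
      positivity
  have h2 : 0 ≤ ∑ i : Fin n, ∑ j : Fin n, tq β (Nat.dist (i:ℕ) (j:ℕ)) * (x i - x j)^2 / 2 :=
    Finset.sum_nonneg fun i _ => Finset.sum_nonneg fun j _ => hterm2 i j
  by_cases hx0 : x i0 = 0
  · -- find an adjacent pair with different values
    have hpair : ∃ k : ℕ, ∃ hk : k + 1 < n, x ⟨k, by omega⟩ ≠ x ⟨k+1, hk⟩ := by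
      by_contra hc
      push_neg at hc
      apply hx
      have hall : ∀ k (hk : k < n), x ⟨k, hk⟩ = 0 := by
        intro k
        induction k with
        | zero => intro hk; exact hx0
        | succ k ih =>
          intro hk
          have h1 := hc k (by omega)
          rw [← h1]
          exact ih (by omega)
      funext i
      have := hall i i.isLt
      simpa using this
    obtain ⟨k, hk, hne⟩ := hpair
    set a : Fin n := ⟨k, by omega⟩ with ha
    set b : Fin n := ⟨k+1, hk⟩ with hb
    have hdab : Nat.dist (a:ℕ) (b:ℕ) = 1 := by simp [ha, hb, Nat.dist]
    have htab : 0 < tq β (Nat.dist (a:ℕ) (b:ℕ)) * (x a - x b)^2 / 2 := by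
      rw [hdab, tq, if_neg (by omega), if_pos rfl]
      have h3 := t_one_beta hβ1 hβ2
      have h4 : 0 < (x a - x b)^2 := by
        have : x a - x b ≠ 0 := sub_ne_zero_of_ne hne
        positivity
      positivity
    have hle : tq β (Nat.dist (a:ℕ) (b:ℕ)) * (x a - x b)^2 / 2
        ≤ ∑ i : Fin n, ∑ j : Fin n, tq β (Nat.dist (i:ℕ) (j:ℕ)) * (x i - x j)^2 / 2 := by
      calc tq β (Nat.dist (a:ℕ) (b:ℕ)) * (x a - x b)^2 / 2
          ≤ ∑ j : Fin n, tq β (Nat.dist (a:ℕ) (j:ℕ)) * (x a - x j)^2 / 2 :=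
            Finset.single_le_sum (fun j _ => hterm2 a j) (Finset.mem_univ b)
        _ ≤ _ :=
            Finset.single_le_sum
              (fun i _ => Finset.sum_nonneg fun j _ => hterm2 i j) (Finset.mem_univ a)
    linarith
  · have hrow0 : (∑ j : Fin n, tq β (Nat.dist (i0:ℕ) (j:ℕ))) < 0 := by
      rw [rowsum]
      have h3 := hU_beta hβ1 hβ2 (n-1-(i0:ℕ))
      have h4 := w_one_beta hβ1 hβ2
      have h5 : V β (i0:ℕ) = 0 := by simp [hi0, V]
      rw [h5]
      linarith
    have hs : (∑ j : Fin n, tq β (Nat.dist (i0:ℕ) (j:ℕ))) * x i0 ^ 2 < 0 :=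
      mul_neg_of_neg_of_pos hrow0 (by positivity)
    have hle : ∑ i : Fin n, (∑ j : Fin n, tq β (Nat.dist (i:ℕ) (j:ℕ))) * x i ^ 2
        ≤ (∑ j : Fin n, tq β (Nat.dist (i0:ℕ) (j:ℕ))) * x i0 ^ 2 := by
      rw [← Finset.sum_erase_add _ _ (Finset.mem_univ i0)]
      have := Finset.sum_nonpos (s := Finset.univ.erase i0)
        (f := fun i : Fin n => (∑ j : Fin n, tq β (Nat.dist (i:ℕ) (j:ℕ))) * x i ^ 2)
        (fun i _ => hterm1 i)
      linarith
    linarith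

end QF

open Matrix in
lemma dot_expand {n : ℕ} (M : Matrix (Fin n) (Fin n) ℝ) (x : Fin n → ℝ) :
    dotProduct x (M *ᵥ x) = ∑ i : Fin n, ∑ j : Fin n, M i j * x i * x j := by
  simp only [dotProduct, Matrix.mulVec, Finset.mul_sum]
  exact Finset.sum_congr rfl fun i _ => Finset.sum_congr rfl fun j _ => by ring

open Matrix in
lemma dot_sym (γ : ℝ) (m : ℕ) (x : Fin (m-1) → ℝ) :
    dotProduct x ((wsgdMatrix γ m + (wsgdMatrix γ m)ᵀ) *ᵥ x)
      = ∑ i : Fin (m-1), ∑ j : Fin (m-1), tq γ (Nat.dist (i:ℕ) (j:ℕ)) * x i * x j := by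
  rw [dot_expand]
  refine Finset.sum_congr rfl fun i _ => Finset.sum_congr rfl fun j _ => ?_
  rw [Matrix.add_apply, Matrix.transpose_apply, entry_eq]

open Matrix

theorem stmt_17 (α β μα μβ : ℝ) (hα0 : 0 < α) (hα1 : α < 1) (hβ1 : 1 < β) (hβ2 : β ≤ 2)
    (hμα : 0 ≤ μα) (hμβ : μβ < 0) (m : ℕ) (hm : 2 ≤ m) :
    (matD α β μα μβ m).IsSymm ∧ (matD α β μα μβ m).PosDef := by
  have hsymm : (matD α β μα μβ m).IsSymm := by
    unfold matD
    exact (((Matrix.isSymm_add_transpose_self (wsgdMatrix α m)).smul μα).add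
      ((Matrix.isSymm_add_transpose_self (wsgdMatrix β m)).smul μβ))
  refine ⟨hsymm, Matrix.posDef_iff_dotProduct_mulVec.mpr ⟨?_, ?_⟩⟩
  · show (matD α β μα μβ m)ᴴ = matD α β μα μβ m
    rw [Matrix.conjTranspose_eq_transpose_of_trivial]
    exact hsymm
  · intro x hx
    have hst : star x = x := by
      funext i; simp
    rw [hst]
    have hn : 0 < m - 1 := by omega
    unfold matD
    rw [Matrix.add_mulVec, Matrix.smul_mulVec, Matrix.smul_mulVec,
      dotProduct_add, dotProduct_smul, dotProduct_smul, dot_sym, dot_sym]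
    have hA := qf_alpha hα0 hα1 x
    have hB := qf_beta hβ1 hβ2 hn x hx
    have h1 : 0 ≤ μα * ∑ i : Fin (m-1), ∑ j : Fin (m-1), tq α (Nat.dist (i:ℕ) (j:ℕ)) * x i * x j :=
      mul_nonneg hμα hA
    have h2 : 0 < μβ * ∑ i : Fin (m-1), ∑ j : Fin (m-1), tq β (Nat.dist (i:ℕ) (j:ℕ)) * x i * x j :=
      mul_pos_of_neg_of_neg hμβ hB
    simpa [smul_eq_mul] using by linarith
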